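/- For every s ≥ 0 with 2s + 3 < N, setting Q = q̃_+^{2s+1} + (z/2)·q̃_-^{2s+2}, the following identities hold: [H_e, Q] = q̃_-^{2s+2} − z·q̃_e^{2s+3}, [H_e, [H_e, Q]] = −2·q̃_e^{2s+3}, [H_e, [H_e, [H_e, Q]]] = 0; [H_o, Q] = −q̃_-^{2s+2} + z·q̃_o^{2s+3}, [H_o, [H_o, Q]] = −2·q̃_o^{2s+3}, [H_o, [H_o, [H_o, Q]]] = 0; and consequently Q − z·[H_e, Q] + (z²/2)·[H_e, [H_e, Q]] = q̃_+^{2s+1} − (z/2)·q̃_-^{2s+2} = Q + z·[H_o, Q] + (z²/2)·[H_o, [H_o, Q]]. -/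

import Mathlib

/-- Commutator `[x, y] = x*y - y*x` in a (not necessarily unital) ring. -/
def cm {A : Type*} [NonUnitalRing A] (x y : A) : A := x * y - y * x

/-- Right-nested iterated commutator `q_i^m = [e_i, [e_{i+1}, ⋯, [e_{i+m-2}, e_{i+m-1}]⋯]]`
(indices mod `N`). -/
def qq {A : Type*} [NonUnitalRing A] {N : ℕ} (e : ZMod N → A) : ℕ → ZMod N → A
  | 0, _ => 0
  | 1, i => e i
  | (m + 2), i => cm (e i) (qq e (m + 1) (i + 1))

/-- `q_+^m = Σ_{i=0}^{N-1} q_i^m`. -/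
def qplus {A : Type*} [NonUnitalRing A] {N : ℕ} (e : ZMod N → A) (m : ℕ) : A :=
  ∑ i ∈ Finset.range N, qq e m (i : ZMod N)

/-- `q_-^m = Σ_{i=0}^{N-1} (-1)^i q_i^m`. -/
def qminus {A : Type*} [NonUnitalRing A] {N : ℕ} (e : ZMod N → A) (m : ℕ) : A :=
  ∑ i ∈ Finset.range N, ((-1 : ℤ) ^ i) • qq e m (i : ZMod N)

/-- `q_e^m = Σ_{i even} q_i^m` (sum over `0 ≤ i < N`). -/
def qev {A : Type*} [NonUnitalRing A] {N : ℕ} (e : ZMod N → A) (m : ℕ) : A :=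
  ∑ i ∈ Finset.range N, if Even i then qq e m (i : ZMod N) else 0

/-- `q_o^m = Σ_{i odd} q_i^m` (sum over `0 ≤ i < N`). -/
def qod {A : Type*} [NonUnitalRing A] {N : ℕ} (e : ZMod N → A) (m : ℕ) : A :=
  ∑ i ∈ Finset.range N, if Odd i then qq e m (i : ZMod N) else 0

/-- Tilde charges: `q̃^m = Σ_{l=0}^{⌊(m-1)/2⌋} C(m-1, l) • q^{m-2l}`. -/
def qt {A : Type*} [NonUnitalRing A] (qf : ℕ → A) (m : ℕ) : A :=
  ∑ l ∈ Finset.range ((m - 1) / 2 + 1), ((m - 1).choose l : ℤ) • qf (m - 2 * l)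

section core
variable {A : Type*} [NonUnitalRing A]

lemma cm_zero_right (x : A) : cm x 0 = 0 := by simp [cm]
lemma cm_zero_left (x : A) : cm 0 x = 0 := by simp [cm]
lemma cm_add_right (x y z : A) : cm x (y + z) = cm x y + cm x z := by
  simp only [cm, mul_add, add_mul]; abel
lemma cm_sub_right (x y z : A) : cm x (y - z) = cm x y - cm x z := by
  simp only [cm, mul_sub, sub_mul]; abel
lemma cm_neg_right (x y : A) : cm x (-y) = - cm x y := by
  simp only [cm, mul_neg, neg_mul]; abel
lemma cm_zsmul_right (n : ℤ) (x y : A) : cm x (n • y) = n • cm x y := by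
  simp only [cm, mul_smul_comm, smul_mul_assoc, smul_sub]
lemma cm_csmul_right {A : Type*} [NonUnitalRing A] [Module ℂ A]
    [SMulCommClass ℂ A A] [IsScalarTower ℂ A A] (c : ℂ) (x y : A) :
    cm x (c • y) = c • cm x y := by
  simp only [cm, mul_smul_comm, smul_mul_assoc, smul_sub]
lemma cm_sum_right {ι : Type*} (s : Finset ι) (x : A) (f : ι → A) :
    cm x (∑ i ∈ s, f i) = ∑ i ∈ s, cm x (f i) := by
  simp only [cm, Finset.mul_sum, Finset.sum_mul, ← Finset.sum_sub_distrib]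
lemma cm_sum_left {ι : Type*} (s : Finset ι) (x : A) (f : ι → A) :
    cm (∑ i ∈ s, f i) x = ∑ i ∈ s, cm (f i) x := by
  simp only [cm, Finset.mul_sum, Finset.sum_mul, ← Finset.sum_sub_distrib]
lemma cm_zsmul_left (n : ℤ) (x y : A) : cm (n • x) y = n • cm x y := by
  simp only [cm, mul_smul_comm, smul_mul_assoc, smul_sub]
lemma cm_csmul_left {A : Type*} [NonUnitalRing A] [Module ℂ A]
    [SMulCommClass ℂ A A] [IsScalarTower ℂ A A] (c : ℂ) (x y : A) :
    cm (c • x) y = c • cm x y := by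
  simp only [cm, mul_smul_comm, smul_mul_assoc, smul_sub]
lemma cm_ite_right (P : Prop) [Decidable P] (x y : A) :
    cm x (if P then y else 0) = if P then cm x y else 0 := by
  split <;> simp [cm]
lemma cm_ite_left (P : Prop) [Decidable P] (x y : A) :
    cm (if P then x else 0) y = if P then cm x y else 0 := by
  split <;> simp [cm]
lemma cm_antisymm (x y : A) : cm x y = - cm y x := by simp [cm]
lemma cm_of_commute {x y : A} (h : x * y = y * x) : cm x y = 0 := by
  simp [cm, h]

/-- swap lemma: if `a` and `b` commute then nested commutators swap. -/
lemma cm_swap {a b : A} (h : a * b = b * a) (x : A) :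
    cm a (cm b x) = cm b (cm a x) := by
  have h1 : ∀ y : A, a * (b * y) = b * (a * y) := fun y => by
    rw [← mul_assoc, h, mul_assoc]
  simp only [cm, mul_sub, sub_mul, mul_assoc, h1, h]
  abel

/-- double commutator with a square-zero element. -/
lemma cm_cm_self {a : A} (ha : a * a = 0) (x : A) :
    cm a (cm a x) = (-2 : ℤ) • (a * (x * a)) := by
  have ha' : ∀ y : A, a * (a * y) = 0 := fun y => by rw [← mul_assoc, ha, zero_mul]
  simp only [cm, mul_sub, sub_mul, mul_assoc, ha', ha, mul_zero, neg_smul, two_smul]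
  abel

/-- sandwich: `a * (cm b Z * a) = 0` when `aba = a` and `a` commutes with `Z`. -/
lemma cm_sandwich {a b Z : A} (haba : a * b * a = a) (hZa : a * Z = Z * a) :
    a * (cm b Z * a) = 0 := by
  have e1 : a * b * Z * a = a * Z := by
    rw [mul_assoc (a*b) Z a, ← hZa, ← mul_assoc, haba]
  have e2 : a * Z * b * a = a * Z := by
    rw [hZa, mul_assoc Z a b, mul_assoc Z (a*b) a, haba, ← hZa]
  have : a * (cm b Z * a) = a * b * Z * a - a * Z * b * a := by
    simp only [cm, sub_mul, mul_sub, mul_assoc]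
  rw [this, e1, e2, sub_self]

/-- the key `[b,[a,[b,Z]]]` expansion. -/
lemma cm_key {a b Z : A} (hb2 : b * b = 0) (hbab : b * (a * b) = b)
    (hZa : a * Z = Z * a) :
    cm b (cm a (cm b Z)) = cm b Z + b * (Z * (b * a)) - a * (b * (Z * b)) := by
  have hb2' : ∀ y : A, b * (b * y) = 0 := fun y => by rw [← mul_assoc, hb2, zero_mul]
  have hbab' : ∀ y : A, b * (a * (b * y)) = b * y := fun y => by
    rw [← mul_assoc, ← mul_assoc, mul_assoc b a b, hbab]
  have hZa' : ∀ y : A, a * (Z * y) = Z * (a * y) := fun y => by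
    rw [← mul_assoc, hZa, mul_assoc]
  simp only [cm, mul_sub, sub_mul, mul_assoc, hb2', hbab', hbab, hZa', hb2,
    mul_zero, zero_mul, sub_zero, zero_sub]
  abel

/-- `[b,[a,b]] = 2b`. -/
lemma cm_bab {a b : A} (hb2 : b * b = 0) (hbab : b * (a * b) = b) :
    cm b (cm a b) = (2 : ℤ) • b := by
  have hb2' : ∀ y : A, b * (b * y) = 0 := fun y => by rw [← mul_assoc, hb2, zero_mul]
  simp only [cm, mul_sub, sub_mul, mul_assoc, hb2', hbab, hb2, mul_zero, zero_mul,
    sub_zero, zero_sub, two_smul]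
  abel

end core
section tl
variable {A : Type*} [NonUnitalRing A] {N : ℕ}

lemma qq_succ {e : ZMod N → A} {m : ℕ} (hm : 1 ≤ m) (i : ZMod N) :
    qq e (m+1) i = cm (e i) (qq e m (i+1)) := by
  rcases m with _|m
  · omega
  · rfl

variable (hN : 4 ≤ N)
include hN

lemma zmod_cast_inj {a b : ℕ} (ha : a < N) (hb : b < N) :
    ((a : ZMod N) = (b : ZMod N)) ↔ a = b := by
  haveI : NeZero N := ⟨by omega⟩
  rw [ZMod.natCast_eq_natCast_iff, Nat.ModEq, Nat.mod_eq_of_lt ha, Nat.mod_eq_of_lt hb]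

lemma zmod_sub_one (i : ZMod N) : i - 1 = i + ((N-1 : ℕ) : ZMod N) := by
  have h : ((N-1 : ℕ) : ZMod N) = -1 := by
    have : ((N : ℕ) : ZMod N) = 0 := ZMod.natCast_self N
    rw [Nat.cast_sub (by omega : 1 ≤ N), this]
    push_cast
    ring
  rw [h]
  ring

lemma zmod_addc_inj (i : ZMod N) {a b : ℕ} (ha : a < N) (hb : b < N) :
    (i + (a : ZMod N) = i + (b : ZMod N)) ↔ a = b := by
  rw [add_right_inj, zmod_cast_inj hN ha hb]

lemma zmod_addc_eq_sub_one (i : ZMod N) {a : ℕ} (ha : a < N) :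
    (i + (a : ZMod N) = i - 1) ↔ a = N - 1 := by
  rw [zmod_sub_one hN, zmod_addc_inj hN i ha (by omega)]

variable {e : ZMod N → A}
variable (h4 : ∀ i j : ZMod N, j ≠ i - 1 → j ≠ i → j ≠ i + 1 → e i * e j = e j * e i)
include h4

lemma far_comm (i : ZMod N) {a : ℕ} (h2a : 2 ≤ a) (haN : a ≤ N - 2) :
    e i * e (i + (a : ZMod N)) = e (i + (a : ZMod N)) * e i := by
  haveI : NeZero N := ⟨by omega⟩
  refine (h4 (i + (a : ZMod N)) i ?_ ?_ ?_).symm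
  · -- i ≠ (i + a) - 1
    intro hc
    rw [eq_sub_iff_add_eq] at hc
    have : i + (1 : ℕ) = i + (a : ZMod N) := by simpa using hc
    rw [zmod_addc_inj hN i (by omega) (by omega)] at this
    omega
  · intro hc
    have : i + (0 : ℕ) = i + (a : ZMod N) := by simpa using hc.symm
    rw [zmod_addc_inj hN i (by omega) (by omega)] at this
    omega
  · intro hc
    have : i + ((0:ℕ) : ZMod N) = i + ((a+1 : ℕ) : ZMod N) := by
      push_cast
      rw [← add_assoc]
      simpa using hc
    rw [zmod_addc_inj hN i (by omega) (by omega)] at this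
    omega

lemma commute_qq {j : ZMod N} (m : ℕ) (i : ZMod N)
    (h : ∀ k : ℕ, k < m → e j * e (i + (k : ZMod N)) = e (i + (k : ZMod N)) * e j) :
    e j * qq e m i = qq e m i * e j := by
  induction m using Nat.strong_induction_on generalizing i with
  | _ m IH =>
    match m with
    | 0 => simp [qq]
    | 1 =>
      have := h 0 (by omega)
      simpa [show qq e 1 i = e i from rfl] using this
    | (m+2) =>
      have hX : e j * qq e (m+1) (i+1) = qq e (m+1) (i+1) * e j := by
        refine IH (m+1) (by omega) (i+1) (fun k hk => ?_)
        have hcast : i + 1 + (k : ZMod N) = i + ((k+1 : ℕ) : ZMod N) := by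
          push_cast; ring
        rw [hcast]
        exact h (k+1) (by omega)
      have h0 : e j * e i = e i * e j := by
        have := h 0 (by omega)
        simpa using this
      have c1 : Commute (e j) (e i) := h0
      have c2 : Commute (e j) (qq e (m+1) (i+1)) := hX
      exact ((c1.mul_right c2).sub_right (c2.mul_right c1))

lemma far_qq (i : ZMod N) {a : ℕ} (m : ℕ) (h2a : 2 ≤ a) (ham : a + m ≤ N - 1) :
    e i * qq e m (i + (a : ZMod N)) = qq e m (i + (a : ZMod N)) * e i := by
  refine commute_qq hN h4 m _ (fun k hk => ?_)
  have hcast : i + (a : ZMod N) + (k : ZMod N) = i + ((a+k : ℕ) : ZMod N) := by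
    push_cast; ring
  rw [hcast]
  exact far_comm hN h4 i (by omega) (by omega)

variable (h2 : ∀ i : ZMod N, e i * e (i + 1) * e i = e i)
include h2

lemma sandwich_qq (i : ZMod N) {m : ℕ} (hm : 2 ≤ m) (hmN : m ≤ N - 2) :
    e i * (qq e m (i+1) * e i) = 0 := by
  obtain ⟨k, rfl⟩ : ∃ k, m = k + 2 := ⟨m - 2, by omega⟩
  have hq : qq e (k+2) (i+1) = cm (e (i+1)) (qq e (k+1) (i+1+1)) := rfl
  rw [hq]
  refine cm_sandwich (h2 i) ?_
  have hcast : i + 1 + 1 = i + ((2:ℕ) : ZMod N) := by push_cast; ring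
  rw [hcast]
  exact far_qq hN h4 i (k+1) (by omega) (by omega)

end tl
def cc (m : ℕ) : ℤ := if m = 2 then 2 else 1

lemma cc_ne_two {m : ℕ} (h : m ≠ 2) : cc m = 1 := by unfold cc; rw [if_neg h]
lemma cc_two : cc 2 = 2 := rfl

section main
variable {A : Type*} [NonUnitalRing A] {N : ℕ} (hN : 4 ≤ N)
variable {e : ZMod N → A}
variable (h1 : ∀ i : ZMod N, e i * e i = 0)
variable (h2 : ∀ i : ZMod N, e i * e (i + 1) * e i = e i)
variable (h3 : ∀ i : ZMod N, e (i + 1) * e i * e (i + 1) = e (i + 1))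
variable (h4 : ∀ i j : ZMod N, j ≠ i - 1 → j ≠ i → j ≠ i + 1 → e i * e j = e j * e i)
include hN h1 h2 h3 h4

set_option maxHeartbeats 1000000 in
lemma main_cm : ∀ m : ℕ, 1 ≤ m → m + 2 ≤ N → ∀ i j : ZMod N,
    cm (e j) (qq e m i)
      = (if j = i - 1 then qq e (m+1) (i-1) else 0)
      - (if j = i + (m : ZMod N) then qq e (m+1) i else 0)
      + cc m • ((if j = i + 1 then qq e (m-1) (i+1) else 0)
                - (if j = i + ((m-2 : ℕ) : ZMod N) then qq e (m-1) i else 0)) := by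
  intro m
  induction m using Nat.strong_induction_on with
  | _ m IH =>
    intro hm1 hmN i j
    haveI : NeZero N := ⟨by omega⟩
    have q0 : ∀ x : ZMod N, qq e 0 x = 0 := fun _ => rfl
    have q1 : ∀ x : ZMod N, qq e 1 x = e x := fun _ => rfl
    have hsub : i - 1 = i + ((N-1 : ℕ) : ZMod N) := zmod_sub_one hN i
    have keyne : ∀ {a b : ℕ} {u v : ZMod N}, a < N → b < N → a ≠ b →
        u = i + (a : ZMod N) → v = i + (b : ZMod N) → ¬ (u = v) := by
      intro a b u v ha hb hab hu hv hc
      rw [hu, hv, zmod_addc_inj hN i ha hb] at hc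
      exact hab hc
    have wrap : i + ((N-1 : ℕ) : ZMod N) + 1 = i := by
      rw [← hsub]; exact sub_add_cancel i 1
    by_cases hm1' : m = 1
    · subst hm1'
      by_cases hA : j = i - 1
      · rw [hA, hsub]
        have key : qq e 2 (i + ((N-1 : ℕ) : ZMod N)) =
            cm (e (i + ((N-1 : ℕ) : ZMod N))) (qq e 1 i) := by
          rw [qq_succ (by omega), wrap]
        rw [if_pos rfl,
          if_neg (keyne (a := N-1) (b := 1) (by omega) (by omega) (by omega) rfl rfl), key]
        simp [q0, cc]
      by_cases hB : j = i
      · rw [hB]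
        have l1 : cm (e i) (qq e 1 i) = 0 := by rw [q1, cm, h1 i, sub_self]
        rw [l1,
          if_neg (keyne (a := 0) (b := N-1) (by omega) (by omega) (by omega) (by push_cast; ring) hsub),
          if_neg (keyne (a := 0) (b := 1) (by omega) (by omega) (by omega) (by push_cast; ring) (by push_cast; ring))]
        simp [q0]
      by_cases hC : j = i + 1
      · rw [hC]
        have l1 : cm (e (i + 1)) (qq e 1 i) = -(qq e 2 i) := by
          rw [q1, cm_antisymm]
          rfl
        rw [l1,
          if_neg (keyne (a := 1) (b := N-1) (by omega) (by omega) (by omega) (by push_cast; ring) hsub),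
          if_pos (show i + 1 = i + ((1:ℕ) : ZMod N) by push_cast; ring), if_pos rfl]
        simp [q0, cc]
      · have hcomm : e j * qq e 1 i = qq e 1 i * e j := by
          rw [q1]
          exact (h4 i j hA hB hC).symm
        rw [cm_of_commute hcomm, if_neg hA, if_neg hC,
          if_neg (fun hc => hC (by rw [hc]; push_cast; ring))]
        simp [q0]
    by_cases hm2' : m = 2
    · subst hm2'
      by_cases hA : j = i - 1
      · rw [hA, hsub]
        have key : qq e 3 (i + ((N-1 : ℕ) : ZMod N)) =
            cm (e (i + ((N-1 : ℕ) : ZMod N))) (qq e 2 i) := by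
          rw [qq_succ (by omega), wrap]
        rw [if_pos rfl,
          if_neg (keyne (a := N-1) (b := 2) (by omega) (by omega) (by omega) rfl rfl), key,
          if_neg (keyne (a := N-1) (b := 1) (by omega) (by omega) (by omega) rfl (by push_cast; ring)),
          if_neg (keyne (a := N-1) (b := 0) (by omega) (by omega) (by omega) rfl (by push_cast; ring))]
        simp [cc]
      by_cases hB : j = i
      · rw [hB]
        have l1 : cm (e i) (qq e 2 i) = (-2 : ℤ) • (e i) := by
          rw [show qq e 2 i = cm (e i) (qq e 1 (i+1)) from rfl, cm_cm_self (h1 i), q1]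
          congr 1
          rw [← mul_assoc]
          exact h2 i
        rw [l1,
          if_neg (keyne (a := 0) (b := N-1) (by omega) (by omega) (by omega) (by push_cast; ring) hsub),
          if_neg (keyne (a := 0) (b := 2) (by omega) (by omega) (by omega) (by push_cast; ring) rfl),
          if_neg (keyne (a := 0) (b := 1) (by omega) (by omega) (by omega) (by push_cast; ring) (by push_cast; ring)),
          if_pos (show i = i + (((2-2 : ℕ)) : ZMod N) by push_cast; ring)]
        simp [q1, cc]
      by_cases hC : j = i + 1
      · rw [hC]
        have l1 : cm (e (i+1)) (qq e 2 i) = (2 : ℤ) • (e (i+1)) := by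
          rw [show qq e 2 i = cm (e i) (qq e 1 (i+1)) from rfl, q1]
          exact cm_bab (h1 (i+1)) (by rw [← mul_assoc]; exact h3 i)
        rw [l1,
          if_neg (keyne (a := 1) (b := N-1) (by omega) (by omega) (by omega) (by push_cast; ring) hsub),
          if_neg (keyne (a := 1) (b := 2) (by omega) (by omega) (by omega) (by push_cast; ring) rfl),
          if_pos rfl,
          if_neg (keyne (a := 1) (b := 0) (by omega) (by omega) (by omega) (by push_cast; ring) (by push_cast; ring))]
        simp [q1, cc]
      by_cases hD : j = i + ((2:ℕ) : ZMod N)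
      · rw [hD]
        have hfar : e (i + ((2:ℕ) : ZMod N)) * e i = e i * e (i + ((2:ℕ) : ZMod N)) :=
          (far_comm hN h4 i (by omega) (by omega)).symm
        have l1 : cm (e (i + ((2:ℕ) : ZMod N))) (qq e 2 i) = -(qq e 3 i) := by
          rw [show qq e 2 i = cm (e i) (qq e 1 (i+1)) from rfl, cm_swap hfar, q1]
          have inner : cm (e (i + ((2:ℕ) : ZMod N))) (e (i+1)) = -(qq e 2 (i+1)) := by
            rw [cm_antisymm]
            congr 1
            rw [show qq e 2 (i+1) = cm (e (i+1)) (qq e 1 (i+1+1)) from rfl, q1,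
              show i+1+1 = i + ((2:ℕ) : ZMod N) by push_cast; ring]
          rw [inner, cm_neg_right]
          rfl
        rw [l1,
          if_neg (keyne (a := 2) (b := N-1) (by omega) (by omega) (by omega) rfl hsub),
          if_pos rfl,
          if_neg (keyne (a := 2) (b := 1) (by omega) (by omega) (by omega) rfl (by push_cast; ring)),
          if_neg (keyne (a := 2) (b := 0) (by omega) (by omega) (by omega) rfl (by push_cast; ring))]
        simp [cc]
      · have hcomm : e j * qq e 2 i = qq e 2 i * e j := by
          refine commute_qq hN h4 2 i (fun kk hkk => ?_)
          interval_cases kk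
          · rw [show i + ((0:ℕ) : ZMod N) = i by push_cast; ring]
            exact (h4 i j hA hB hC).symm
          · rw [show i + ((1:ℕ) : ZMod N) = i + 1 by push_cast; ring]
            refine (h4 (i+1) j ?_ ?_ ?_).symm
            · rwa [add_sub_cancel_right]
            · exact hC
            · intro hc; exact hD (by rw [hc]; push_cast; ring)
        rw [cm_of_commute hcomm, if_neg hA, if_neg hD, if_neg hC,
          if_neg (fun hc => hB (by rw [hc]; push_cast; ring))]
        simp
    -- step : m = k + 3
    · obtain ⟨k, rfl⟩ : ∃ k, m = k + 3 := ⟨m - 3, by omega⟩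
      simp only [show (k+3-2 : ℕ) = k+1 from rfl, show (k+3-1 : ℕ) = k+2 from rfl,
        show (k+3+1 : ℕ) = k+4 from rfl]
      have hq : qq e (k+3) i = cm (e i) (qq e (k+2) (i+1)) := rfl
      have cck : cc (k+3) = 1 := cc_ne_two (by omega)
      rw [cck, one_smul]
      by_cases hA : j = i - 1
      · rw [hA, hsub]
        have key : qq e (k+4) (i + ((N-1 : ℕ) : ZMod N)) =
            cm (e (i + ((N-1 : ℕ) : ZMod N))) (qq e (k+3) i) := by
          rw [qq_succ (by omega), wrap]
        rw [if_pos rfl,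
          if_neg (keyne (a := N-1) (b := k+3) (by omega) (by omega) (by omega) rfl rfl),
          if_neg (keyne (a := N-1) (b := 1) (by omega) (by omega) (by omega) rfl (by push_cast; ring)),
          if_neg (keyne (a := N-1) (b := k+1) (by omega) (by omega) (by omega) rfl rfl), key]
        simp
      by_cases hB : j = i
      · rw [hB]
        have l1 : cm (e i) (qq e (k+3) i) = 0 := by
          rw [hq, cm_cm_self (h1 i), sandwich_qq hN h4 h2 i (by omega) (by omega), smul_zero]
        rw [l1,
          if_neg (keyne (a := 0) (b := N-1) (by omega) (by omega) (by omega) (by push_cast; ring) hsub),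
          if_neg (keyne (a := 0) (b := k+3) (by omega) (by omega) (by omega) (by push_cast; ring) rfl),
          if_neg (keyne (a := 0) (b := 1) (by omega) (by omega) (by omega) (by push_cast; ring) (by push_cast; ring)),
          if_neg (keyne (a := 0) (b := k+1) (by omega) (by omega) (by omega) (by push_cast; ring) rfl)]
        simp
      by_cases hC : j = i + 1
      · rw [hC]
        have hq2 : qq e (k+3) i = cm (e i) (cm (e (i+1)) (qq e (k+1) (i+1+1))) := rfl
        have hZa : e i * qq e (k+1) (i+1+1) = qq e (k+1) (i+1+1) * e i := by
          rw [show i+1+1 = i + ((2:ℕ) : ZMod N) by push_cast; ring]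
          exact far_qq hN h4 i (k+1) (by omega) (by omega)
        have lkey := cm_key (h1 (i+1)) (by rw [← mul_assoc]; exact h3 i) hZa
        rw [hq2, lkey,
          if_neg (keyne (a := 1) (b := N-1) (by omega) (by omega) (by omega) (by push_cast; ring) hsub),
          if_neg (keyne (a := 1) (b := k+3) (by omega) (by omega) (by omega) (by push_cast; ring) rfl),
          if_pos rfl]
        have r1 : qq e (k+2) (i+1) = cm (e (i+1)) (qq e (k+1) (i+1+1)) := rfl
        rcases Nat.eq_zero_or_pos k with hk0|hk
        · -- k = 0, m = 3
          have hs : e (i+1) * (qq e (k+1) (i+1+1) * e (i+1)) = e (i+1) := by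
            subst hk0
            rw [q1, ← mul_assoc]
            exact h2 (i+1)
          have t1 : e (i+1) * (qq e (k+1) (i+1+1) * (e (i+1) * e i))
              = (e (i+1) * (qq e (k+1) (i+1+1) * e (i+1))) * e i := by
            simp only [mul_assoc]
          rw [t1, hs,
            if_pos (show i + 1 = i + ((k+1:ℕ) : ZMod N) by subst hk0; push_cast; ring),
            ← r1]
          subst hk0
          rw [show qq e (0+2) i = cm (e i) (qq e 1 (i+1)) from rfl, q1]
          simp only [cm]
          abel
        · -- k ≥ 1
          have hs : e (i+1) * (qq e (k+1) (i+1+1) * e (i+1)) = 0 :=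
            sandwich_qq hN h4 h2 (i+1) (by omega) (by omega)
          have t1 : e (i+1) * (qq e (k+1) (i+1+1) * (e (i+1) * e i))
              = (e (i+1) * (qq e (k+1) (i+1+1) * e (i+1))) * e i := by
            simp only [mul_assoc]
          rw [t1, hs, zero_mul, mul_zero,
            if_neg (keyne (a := 1) (b := k+1) (by omega) (by omega) (by omega) (by push_cast; ring) rfl),
            ← r1]
          simp
      · -- far case
        have hswap : cm (e j) (qq e (k+3) i) = cm (e i) (cm (e j) (qq e (k+2) (i+1))) := by
          rw [hq]
          exact cm_swap ((h4 i j hA hB hC).symm) _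
        rw [hswap, IH (k+2) (by omega) (by omega) (by omega) (i+1) j]
        simp only [show (k+2-2 : ℕ) = k from rfl, show (k+2-1 : ℕ) = k+1 from rfl,
          show (k+2+1 : ℕ) = k+3 from rfl]
        rw [cm_add_right, cm_sub_right, cm_zsmul_right, cm_sub_right,
          cm_ite_right, cm_ite_right, cm_ite_right, cm_ite_right]
        simp only [add_sub_cancel_right]
        rw [if_neg hB]
        rw [show i+1+((k+2 : ℕ) : ZMod N) = i + ((k+3 : ℕ) : ZMod N) by push_cast; ring,
          show i+1+((k : ℕ) : ZMod N) = i + ((k+1 : ℕ) : ZMod N) by push_cast; ring]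
        have c1 : cm (e i) (qq e (k+3) (i+1)) = qq e (k+4) i := (qq_succ (by omega) i).symm
        have c2 : cm (e i) (qq e (k+1) (i+1+1)) = 0 := by
          apply cm_of_commute
          rw [show i+1+1 = i + ((2:ℕ) : ZMod N) by push_cast; ring]
          exact far_qq hN h4 i (k+1) (by omega) (by omega)
        have c3 : cm (e i) (qq e (k+1) (i+1)) = qq e (k+2) i := (qq_succ (by omega) i).symm
        rw [c1, c2, c3]
        rw [if_neg hA, if_neg hC]
        rcases Nat.eq_zero_or_pos k with hk0|hk
        · have hne1 : ¬ j = i + ((k+1 : ℕ) : ZMod N) := by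
            subst hk0
            intro hc
            exact hC (by rw [hc]; push_cast; ring)
          rw [if_neg hne1]
          simp
        · rw [cc_ne_two (by omega)]
          simp
end main
section ezero
variable {A : Type*} [NonUnitalRing A] {N : ℕ} (hN : 4 ≤ N) (hNe : Even N)
variable {e : ZMod N → A}
variable (h1 : ∀ i : ZMod N, e i * e i = 0)
variable (h2 : ∀ i : ZMod N, e i * e (i + 1) * e i = e i)
variable (h3 : ∀ i : ZMod N, e (i + 1) * e i * e (i + 1) = e (i + 1))
variable (h4 : ∀ i j : ZMod N, j ≠ i - 1 → j ≠ i → j ≠ i + 1 → e i * e j = e j * e i)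
include hN hNe h1 h2 h3 h4

lemma ezero_small (m : ℕ) (hmo : Odd m) (hmN : m + 2 ≤ N) (i j : ZMod N)
    (hd : Even ((j - i).val)) : cm (e j) (qq e m i) = 0 := by
  haveI : NeZero N := ⟨by omega⟩
  have hNmod : N % 2 = 0 := Nat.even_iff.mp hNe
  have hmmod : m % 2 = 1 := Nat.odd_iff.mp hmo
  set d := (j - i).val with hdd
  have hdmod : d % 2 = 0 := Nat.even_iff.mp hd
  have hdlt : d < N := ZMod.val_lt (j - i)
  have hj : j = i + (d : ZMod N) := by
    rw [hdd, ZMod.natCast_rightInverse (j - i)]; ring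
  have keyne : ∀ {a b : ℕ} {u v : ZMod N}, a < N → b < N → a ≠ b →
      u = i + (a : ZMod N) → v = i + (b : ZMod N) → ¬ (u = v) := by
    intro a b u v ha hb hab hu hv hc
    rw [hu, hv, zmod_addc_inj hN i ha hb] at hc
    exact hab hc
  rw [main_cm hN h1 h2 h3 h4 m (by omega) hmN i j,
    if_neg (keyne (a := d) (b := N-1) (by omega) (by omega) (by omega) hj (zmod_sub_one hN i)),
    if_neg (keyne (a := d) (b := m) (by omega) (by omega) (by omega) hj rfl),
    if_neg (keyne (a := d) (b := 1) (by omega) (by omega) (by omega) hj (by push_cast; ring))]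
  rcases Nat.lt_or_ge m 2 with hm2|hm2
  · -- m = 1
    have hm1 : m = 1 := by omega
    subst hm1
    simp [show ∀ x : ZMod N, qq e 0 x = 0 from fun _ => rfl]
  · rw [if_neg (keyne (a := d) (b := m-2) (by omega) (by omega) (by omega) hj rfl)]
    simp

lemma ezero_top (i j : ZMod N) (hd : Even ((j - i).val)) :
    cm (e j) (qq e (N-1) i) = 0 := by
  haveI : NeZero N := ⟨by omega⟩
  have hNmod : N % 2 = 0 := Nat.even_iff.mp hNe
  set d := (j - i).val with hdd
  have hdmod : d % 2 = 0 := Nat.even_iff.mp hd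
  have hdlt : d < N := ZMod.val_lt (j - i)
  have hj : j = i + (d : ZMod N) := by
    rw [hdd, ZMod.natCast_rightInverse (j - i)]; ring
  have keyne : ∀ {a b : ℕ} {u v : ZMod N}, a < N → b < N → a ≠ b →
      u = i + (a : ZMod N) → v = i + (b : ZMod N) → ¬ (u = v) := by
    intro a b u v ha hb hab hu hv hc
    rw [hu, hv, zmod_addc_inj hN i ha hb] at hc
    exact hab hc
  rcases Nat.eq_zero_or_pos d with hd0|hdpos
  · -- d = 0 : j = i
    have hji : j = i := by rw [hj, hd0]; push_cast; ring
    subst hji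
    rw [show (N-1) = (N-2)+1 by omega, qq_succ (by omega), cm_cm_self (h1 j),
      sandwich_qq hN h4 h2 j (by omega) (by omega), smul_zero]
  rcases Nat.lt_or_ge d 4 with hd2|hd4
  · -- d = 2
    have hd2' : d = 2 := by omega
    rw [hj, hd2']
    have hfar : e (i + ((2:ℕ) : ZMod N)) * e i = e i * e (i + ((2:ℕ) : ZMod N)) :=
      (far_comm hN h4 i (by omega) (by omega)).symm
    rw [show (N-1) = (N-2)+1 by omega, qq_succ (by omega), cm_swap hfar,
      main_cm hN h1 h2 h3 h4 (N-2) (by omega) (by omega) (i+1) (i + ((2:ℕ) : ZMod N)),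
      if_neg (keyne (a := 2) (b := 0) (by omega) (by omega) (by omega) rfl (by push_cast; ring)),
      if_neg (keyne (a := 2) (b := N-1) (by omega) (by omega) (by omega) rfl
        (show i + 1 + ((N-2:ℕ) : ZMod N) = i + ((N-1:ℕ) : ZMod N) by
          rw [Nat.cast_sub (show 2 ≤ N by omega), Nat.cast_sub (show 1 ≤ N by omega)]
          push_cast; ring)),
      if_pos (show i + ((2:ℕ) : ZMod N) = i + 1 + 1 by push_cast; ring),
      if_neg (keyne (a := 2) (b := N-3) (by omega) (by omega) (by omega) rfl
        (show i + 1 + ((N-2-2:ℕ) : ZMod N) = i + ((N-3:ℕ) : ZMod N) by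
          rw [show (N-2-2 : ℕ) = N-4 by omega, Nat.cast_sub (show 4 ≤ N by omega),
            Nat.cast_sub (show 3 ≤ N by omega)]
          push_cast; ring))]
    rw [cm_add_right, cm_sub_right, cm_zsmul_right, cm_sub_right]
    have hfq : cm (e i) (qq e (N-2-1) (i+1+1)) = 0 := by
      apply cm_of_commute
      rw [show i+1+1 = i + ((2:ℕ) : ZMod N) by push_cast; ring]
      exact far_qq hN h4 i (N-2-1) (by omega) (by omega)
    rw [hfq]
    simp [cm_zero_right]
  · -- 4 ≤ d ≤ N - 2
    have hne1 : j ≠ i - 1 := keyne (a := d) (b := N-1) (by omega) (by omega) (by omega) hj (zmod_sub_one hN i)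
    have hne2 : j ≠ i := keyne (a := d) (b := 0) (by omega) (by omega) (by omega) hj (by push_cast; ring)
    have hne3 : j ≠ i + 1 := keyne (a := d) (b := 1) (by omega) (by omega) (by omega) hj (by push_cast; ring)
    have hne4 : j ≠ i + 1 + 1 := keyne (a := d) (b := 2) (by omega) (by omega) (by omega) hj (by push_cast; ring)
    rw [show (N-1) = (N-2)+1 by omega, qq_succ (by omega) i,
      show (N-2) = (N-3)+1 by omega, qq_succ (by omega) (i+1),
      cm_swap ((h4 i j hne1 hne2 hne3).symm),
      cm_swap ((h4 (i+1) j (by rwa [add_sub_cancel_right]) hne3 hne4).symm)]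
    have inner : cm (e j) (qq e (N-3) (i+1+1)) = 0 := by
      refine ezero_small hN hNe h1 h2 h3 h4 (N-3) ?_ (by omega) (i+1+1) j ?_
      · rw [Nat.odd_iff]; omega
      · have hjj : j - (i+1+1) = ((d - 2 : ℕ) : ZMod N) := by
          rw [hj, Nat.cast_sub (show 2 ≤ d by omega)]
          push_cast; ring
        rw [hjj, ZMod.val_natCast, Nat.mod_eq_of_lt (by omega), Nat.even_iff]
        omega
    rw [inner, cm_zero_right, cm_zero_right]

lemma ezero (m : ℕ) (hmo : Odd m) (hmN : m ≤ N - 1) (i j : ZMod N)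
    (hd : Even ((j - i).val)) : cm (e j) (qq e m i) = 0 := by
  rcases Nat.lt_or_ge m (N-1) with hlt|hge
  · exact ezero_small hN hNe h1 h2 h3 h4 m hmo (by omega) i j hd
  · have : m = N - 1 := by omega
    subst this
    exact ezero_top hN hNe h1 h2 h3 h4 i j hd

end ezero
section qw
variable {A : Type*} [NonUnitalRing A] {N : ℕ}

/-- weighted charge: `QW w m = Σ_x w(π x) • q_x^m` where `π : ZMod N → ZMod 2`. -/
def QW [NeZero N] (hdvd : (2:ℕ) ∣ N) (e : ZMod N → A) (w : ZMod 2 → ℤ) (m : ℕ) : A :=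
  ∑ x : ZMod N, w (ZMod.castHom hdvd (ZMod 2) x) • qq e m x

lemma zsmul_ite (n : ℤ) (P : Prop) [Decidable P] (x : A) :
    n • (if P then x else 0) = if P then n • x else 0 := by split <;> simp

lemma sum_shift [NeZero N] {M : Type*} [AddCommMonoid M] (c : ZMod N) (f : ZMod N → M) :
    ∑ x : ZMod N, f x = ∑ x : ZMod N, f (x + c) :=
  (Equiv.sum_comp (Equiv.addRight c) f).symm

lemma QW_zero [NeZero N] (hdvd : (2:ℕ) ∣ N) (e : ZMod N → A) (w : ZMod 2 → ℤ) :
    QW hdvd e w 0 = 0 := by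
  unfold QW
  apply Finset.sum_eq_zero
  intro x _
  rw [show qq e 0 x = 0 from rfl, smul_zero]

lemma QW_congr [NeZero N] (hdvd : (2:ℕ) ∣ N) (e : ZMod N → A) {w w' : ZMod 2 → ℤ} (m : ℕ)
    (h : ∀ t, w t = w' t) : QW hdvd e w m = QW hdvd e w' m := by
  unfold QW
  exact Finset.sum_congr rfl (fun x _ => by rw [h])

lemma QW_sub_eq [NeZero N] (hdvd : (2:ℕ) ∣ N) (e : ZMod N → A) {w w' w'' : ZMod 2 → ℤ} (m : ℕ)
    (h : ∀ t, w t - w' t = w'' t) :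
    QW hdvd e w m - QW hdvd e w' m = QW hdvd e w'' m := by
  unfold QW
  rw [← Finset.sum_sub_distrib]
  exact Finset.sum_congr rfl (fun x _ => by rw [← sub_smul, h])

lemma QW_add_eq [NeZero N] (hdvd : (2:ℕ) ∣ N) (e : ZMod N → A) {w w' w'' : ZMod 2 → ℤ} (m : ℕ)
    (h : ∀ t, w t + w' t = w'' t) :
    QW hdvd e w m + QW hdvd e w' m = QW hdvd e w'' m := by
  unfold QW
  rw [← Finset.sum_add_distrib]
  exact Finset.sum_congr rfl (fun x _ => by rw [← add_smul, h])

lemma cast_sub_two_zmod2 {m : ℕ} (hm : 2 ≤ m) : ((m-2 : ℕ) : ZMod 2) = (m : ZMod 2) := by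
  conv_rhs => rw [show m = (m-2) + 2 by omega]
  push_cast
  simp [show (2 : ZMod 2) = 0 by decide]

lemma zmod2_sub_eq_add : ∀ t s : ZMod 2, t - s = t + s := by decide
lemma zmod2_add_add : ∀ t s : ZMod 2, t + s + s = t := by decide

variable (hN : 4 ≤ N)
variable {e : ZMod N → A}
variable (h1 : ∀ i : ZMod N, e i * e i = 0)
variable (h2 : ∀ i : ZMod N, e i * e (i + 1) * e i = e i)
variable (h3 : ∀ i : ZMod N, e (i + 1) * e i * e (i + 1) = e (i + 1))
variable (h4 : ∀ i j : ZMod N, j ≠ i - 1 → j ≠ i → j ≠ i + 1 → e i * e j = e j * e i)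
include hN h1 h2 h3 h4

lemma single [NeZero N] (hdvd : (2:ℕ) ∣ N) (w' : ZMod 2 → ℤ) (m : ℕ) (hm1 : 1 ≤ m)
    (hmN : m + 2 ≤ N) (j : ZMod N) :
    cm (e j) (QW hdvd e w' m)
      = w' (ZMod.castHom hdvd (ZMod 2) j + 1) • qq e (m+1) j
      - w' (ZMod.castHom hdvd (ZMod 2) j + (m : ZMod 2)) • qq e (m+1) (j - (m : ZMod N))
      + ((w' (ZMod.castHom hdvd (ZMod 2) j + 1) * cc m) • qq e (m-1) j
      - (w' (ZMod.castHom hdvd (ZMod 2) j + (m : ZMod 2)) * cc m) •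
          qq e (m-1) (j - ((m-2 : ℕ) : ZMod N))) := by
  set π := ZMod.castHom hdvd (ZMod 2) with hπ
  unfold QW
  rw [cm_sum_right]
  rw [Finset.sum_congr rfl (fun x _ => by
    rw [cm_zsmul_right, main_cm hN h1 h2 h3 h4 m hm1 hmN x j, smul_add, smul_sub, smul_smul,
      smul_sub, zsmul_ite, zsmul_ite, zsmul_ite, zsmul_ite])]
  simp only [Finset.sum_add_distrib, Finset.sum_sub_distrib]
  have S1 : (∑ x : ZMod N, if j = x - 1 then w' (π x) • qq e (m+1) (x-1) else 0)
      = w' (π j + 1) • qq e (m+1) j := by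
    rw [Finset.sum_congr rfl (fun x _ => if_congr
      (by rw [eq_sub_iff_add_eq, eq_comm]) rfl rfl),
      Finset.sum_ite_eq' Finset.univ (j+1) (fun x => w' (π x) • qq e (m+1) (x-1)),
      if_pos (Finset.mem_univ _), add_sub_cancel_right, map_add, map_one]
  have S2 : (∑ x : ZMod N, if j = x + (m : ZMod N) then w' (π x) • qq e (m+1) x else 0)
      = w' (π j + (m : ZMod 2)) • qq e (m+1) (j - (m : ZMod N)) := by
    rw [Finset.sum_congr rfl (fun x _ => if_congr
      (by rw [eq_comm, ← eq_sub_iff_add_eq]) rfl rfl),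
      Finset.sum_ite_eq' Finset.univ (j - (m : ZMod N)) (fun x => w' (π x) • qq e (m+1) x),
      if_pos (Finset.mem_univ _), map_sub, map_natCast, zmod2_sub_eq_add]
  have S3 : (∑ x : ZMod N, if j = x + 1 then (w' (π x) * cc m) • qq e (m-1) (x+1) else 0)
      = (w' (π j + 1) * cc m) • qq e (m-1) j := by
    rw [Finset.sum_congr rfl (fun x _ => if_congr
      (by rw [eq_comm, ← eq_sub_iff_add_eq]) rfl rfl),
      Finset.sum_ite_eq' Finset.univ (j - 1) (fun x => (w' (π x) * cc m) • qq e (m-1) (x+1)),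
      if_pos (Finset.mem_univ _), sub_add_cancel, map_sub, map_one, zmod2_sub_eq_add]
  rw [S1, S2, S3]
  rcases Nat.lt_or_ge m 2 with hm2|hm2
  · -- m = 1
    have hm1' : m = 1 := by omega
    subst hm1'
    have z1 : ∀ x : ZMod N, qq e (1-1) x = 0 := fun _ => rfl
    have z0 : ∀ x : ZMod N, qq e 0 x = 0 := fun _ => rfl
    simp [z1, z0]
  · have S4 : (∑ x : ZMod N, if j = x + ((m-2:ℕ) : ZMod N)
        then (w' (π x) * cc m) • qq e (m-1) x else 0)
        = (w' (π j + (m : ZMod 2)) * cc m) • qq e (m-1) (j - ((m-2:ℕ) : ZMod N)) := by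
      rw [Finset.sum_congr rfl (fun x _ => if_congr
        (by rw [eq_comm, ← eq_sub_iff_add_eq]) rfl rfl),
        Finset.sum_ite_eq' Finset.univ (j - ((m-2:ℕ) : ZMod N))
          (fun x => (w' (π x) * cc m) • qq e (m-1) x),
        if_pos (Finset.mem_univ _), map_sub, map_natCast, zmod2_sub_eq_add,
        cast_sub_two_zmod2 hm2]
    rw [S4]

lemma master [NeZero N] (hdvd : (2:ℕ) ∣ N) (w w' : ZMod 2 → ℤ) (m : ℕ) (hm1 : 1 ≤ m)
    (hmN : m + 2 ≤ N) :
    cm (QW hdvd e w 1) (QW hdvd e w' m)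
      = QW hdvd e (fun t => w t * w' (t+1)) (m+1)
      - QW hdvd e (fun t => w (t + (m:ZMod 2)) * w' t) (m+1)
      + cc m • (QW hdvd e (fun t => w t * w' (t+1)) (m-1)
      - QW hdvd e (fun t => w (t + (m:ZMod 2)) * w' t) (m-1)) := by
  set π := ZMod.castHom hdvd (ZMod 2) with hπ
  rw [show QW hdvd e w 1 = ∑ x : ZMod N, w (π x) • e x from
    Finset.sum_congr rfl (fun x _ => by rw [show qq e 1 x = e x from rfl]),
    cm_sum_left]
  rw [Finset.sum_congr rfl (fun x _ => by
    rw [cm_zsmul_left, single hN h1 h2 h3 h4 hdvd w' m hm1 hmN x, smul_add, smul_sub, smul_sub,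
      smul_smul, smul_smul, smul_smul, smul_smul])]
  simp only [Finset.sum_add_distrib, Finset.sum_sub_distrib]
  have T1 : (∑ x : ZMod N, (w (π x) * w' (π x + 1)) • qq e (m+1) x)
      = QW hdvd e (fun t => w t * w' (t+1)) (m+1) := rfl
  have T2 : (∑ x : ZMod N, (w (π x) * w' (π x + (m : ZMod 2))) • qq e (m+1) (x - (m : ZMod N)))
      = QW hdvd e (fun t => w (t + (m:ZMod 2)) * w' t) (m+1) := by
    rw [sum_shift ((m : ℕ) : ZMod N)]
    refine Finset.sum_congr rfl (fun x _ => ?_)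
    rw [add_sub_cancel_right, map_add, map_natCast, zmod2_add_add]
  have T3 : (∑ x : ZMod N, (w (π x) * (w' (π x + 1) * cc m)) • qq e (m-1) x)
      = cc m • QW hdvd e (fun t => w t * w' (t+1)) (m-1) := by
    rw [Finset.sum_congr rfl (fun x _ =>
      show (w (π x) * (w' (π x + 1) * cc m)) • qq e (m-1) x
        = cc m • ((w (π x) * w' (π x + 1)) • qq e (m-1) x) by
        rw [smul_smul]; congr 1; ring),
      ← Finset.smul_sum]
    rfl
  have T4 : (∑ x : ZMod N, (w (π x) * (w' (π x + (m : ZMod 2)) * cc m)) •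
        qq e (m-1) (x - ((m-2:ℕ) : ZMod N)))
      = cc m • QW hdvd e (fun t => w (t + (m:ZMod 2)) * w' t) (m-1) := by
    rcases Nat.lt_or_ge m 2 with hm2|hm2
    · have hm1' : m = 1 := by omega
      subst hm1'
      have z1 : ∀ x : ZMod N, qq e (1-1) x = 0 := fun _ => rfl
      rw [Finset.sum_congr rfl (fun x _ => by rw [z1, smul_zero]), QW_zero, smul_zero]
      simp
    · rw [sum_shift (((m-2:ℕ)) : ZMod N)]
      rw [Finset.sum_congr rfl (fun x _ =>
        show (w (π (x + ((m-2:ℕ) : ZMod N))) * (w' (π (x + ((m-2:ℕ) : ZMod N)) + (m : ZMod 2)) * cc m)) •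
            qq e (m-1) (x + ((m-2:ℕ) : ZMod N) - ((m-2:ℕ) : ZMod N))
          = cc m • ((w (π x + (m:ZMod 2)) * w' (π x)) • qq e (m-1) x) by
        rw [add_sub_cancel_right, map_add, map_natCast,
          cast_sub_two_zmod2 hm2, zmod2_add_add, smul_smul]
        congr 1
        ring),
        ← Finset.smul_sum]
      rfl
  rw [T1, T2, T3, T4, smul_sub]
end qw
def wE : ZMod 2 → ℤ := fun t => if t = 0 then 1 else 0
def wO : ZMod 2 → ℤ := fun t => if t = 0 then 0 else 1
def wP : ZMod 2 → ℤ := fun _ => 1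
def wM : ZMod 2 → ℤ := fun t => if t = 0 then 1 else -1

section slemmas
variable {A : Type*} [NonUnitalRing A] {N : ℕ} (hN : 4 ≤ N) (hNe : Even N)
variable {e : ZMod N → A}
variable (h1 : ∀ i : ZMod N, e i * e i = 0)
variable (h2 : ∀ i : ZMod N, e i * e (i + 1) * e i = e i)
variable (h3 : ∀ i : ZMod N, e (i + 1) * e i * e (i + 1) = e (i + 1))
variable (h4 : ∀ i j : ZMod N, j ≠ i - 1 → j ≠ i → j ≠ i + 1 → e i * e j = e j * e i)

lemma natCast_zmod2_odd {m : ℕ} (hm : m % 2 = 1) : ((m : ℕ) : ZMod 2) = 1 := by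
  have : ((m : ℕ) : ZMod 2) = ((1 : ℕ) : ZMod 2) := by
    rw [ZMod.natCast_eq_natCast_iff]
    exact Nat.ModEq.symm (by unfold Nat.ModEq; omega)
  simpa using this

lemma natCast_zmod2_even {m : ℕ} (hm : m % 2 = 0) : ((m : ℕ) : ZMod 2) = 0 := by
  have : ((m : ℕ) : ZMod 2) = ((0 : ℕ) : ZMod 2) := by
    rw [ZMod.natCast_eq_natCast_iff]
    exact Nat.ModEq.symm (by unfold Nat.ModEq; omega)
  simpa using this

lemma QW_zsmul [NeZero N] (hdvd : (2:ℕ) ∣ N) (c : ℤ) (w : ZMod 2 → ℤ) (m : ℕ) :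
    QW hdvd e (fun t => c * w t) m = c • QW hdvd e w m := by
  unfold QW
  rw [Finset.smul_sum]
  exact Finset.sum_congr rfl (fun x _ => by rw [smul_smul])

include hN h1 h2 h3 h4

lemma lemS1 [NeZero N] (hdvd : (2:ℕ) ∣ N) (m : ℕ) (hmo : m % 2 = 1) (hmN : m + 2 ≤ N) :
    cm (QW hdvd e wE 1) (QW hdvd e wP m)
      = QW hdvd e wM (m+1) + QW hdvd e wM (m-1) := by
  rw [master hN h1 h2 h3 h4 hdvd wE wP m (by omega) hmN]
  simp only [natCast_zmod2_odd hmo]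
  rw [QW_sub_eq hdvd e (m+1) (show ∀ t, wE t * wP (t+1) - wE (t+1) * wP t = wM t by decide),
    QW_sub_eq hdvd e (m-1) (show ∀ t, wE t * wP (t+1) - wE (t+1) * wP t = wM t by decide),
    cc_ne_two (by omega), one_smul]

lemma lemS4 [NeZero N] (hdvd : (2:ℕ) ∣ N) (m : ℕ) (hmo : m % 2 = 1) (hmN : m + 2 ≤ N) :
    cm (QW hdvd e wO 1) (QW hdvd e wP m)
      = (-1 : ℤ) • QW hdvd e wM (m+1) + (-1 : ℤ) • QW hdvd e wM (m-1) := by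
  rw [master hN h1 h2 h3 h4 hdvd wO wP m (by omega) hmN]
  simp only [natCast_zmod2_odd hmo]
  rw [QW_sub_eq hdvd e (m+1) (show ∀ t, wO t * wP (t+1) - wO (t+1) * wP t = -1 * wM t by decide),
    QW_sub_eq hdvd e (m-1) (show ∀ t, wO t * wP (t+1) - wO (t+1) * wP t = -1 * wM t by decide),
    cc_ne_two (by omega), one_smul, QW_zsmul, QW_zsmul]

lemma lemS2 [NeZero N] (hdvd : (2:ℕ) ∣ N) (m : ℕ) (hmo : m % 2 = 0) (hmN : m + 2 ≤ N)
    (hm1 : 1 ≤ m) :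
    cm (QW hdvd e wE 1) (QW hdvd e wM m)
      = (-2 : ℤ) • QW hdvd e wE (m+1) + cc m • ((-2 : ℤ) • QW hdvd e wE (m-1)) := by
  rw [master hN h1 h2 h3 h4 hdvd wE wM m hm1 hmN]
  simp only [natCast_zmod2_even hmo, add_zero]
  rw [QW_sub_eq hdvd e (m+1) (show ∀ t, wE t * wM (t+1) - wE t * wM t = -2 * wE t by decide),
    QW_sub_eq hdvd e (m-1) (show ∀ t, wE t * wM (t+1) - wE t * wM t = -2 * wE t by decide),
    QW_zsmul, QW_zsmul]

lemma lemS5 [NeZero N] (hdvd : (2:ℕ) ∣ N) (m : ℕ) (hmo : m % 2 = 0) (hmN : m + 2 ≤ N)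
    (hm1 : 1 ≤ m) :
    cm (QW hdvd e wO 1) (QW hdvd e wM m)
      = (2 : ℤ) • QW hdvd e wO (m+1) + cc m • ((2 : ℤ) • QW hdvd e wO (m-1)) := by
  rw [master hN h1 h2 h3 h4 hdvd wO wM m hm1 hmN]
  simp only [natCast_zmod2_even hmo, add_zero]
  rw [QW_sub_eq hdvd e (m+1) (show ∀ t, wO t * wM (t+1) - wO t * wM t = 2 * wO t by decide),
    QW_sub_eq hdvd e (m-1) (show ∀ t, wO t * wM (t+1) - wO t * wM t = 2 * wO t by decide),
    QW_zsmul, QW_zsmul]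

include hNe in
lemma lemS3 [NeZero N] (hdvd : (2:ℕ) ∣ N) {w w' : ZMod 2 → ℤ}
    (hw : ∀ t t', w t ≠ 0 → w' t' ≠ 0 → t = t') (m : ℕ) (hmo : m % 2 = 1) (hmN : m ≤ N - 1) :
    cm (QW hdvd e w 1) (QW hdvd e w' m) = 0 := by
  set π := ZMod.castHom hdvd (ZMod 2) with hπ
  have pare : ∀ z : ZMod N, π z = 0 → Even z.val := by
    intro z hz
    have h1' : ((z.val : ℕ) : ZMod 2) = 0 := by
      rw [← map_natCast π, ZMod.natCast_rightInverse z]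
      exact hz
    rw [ZMod.natCast_eq_zero_iff] at h1'
    exact (even_iff_two_dvd).mpr h1'
  unfold QW
  rw [cm_sum_left]
  apply Finset.sum_eq_zero
  intro x _
  rw [cm_zsmul_left]
  by_cases hx : w (π x) = 0
  · rw [hx, zero_smul]
  rw [cm_sum_right]
  rw [Finset.sum_eq_zero, smul_zero]
  intro y _
  rw [cm_zsmul_right]
  by_cases hy : w' (π y) = 0
  · rw [hy, zero_smul]
  have hxy : π x = π y := hw _ _ hx hy
  have : cm (qq e 1 x) (qq e m y) = 0 := by
    rw [show qq e 1 x = e x from rfl]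
    refine ezero hN hNe h1 h2 h3 h4 m (Nat.odd_iff.mpr hmo) hmN y x ?_
    refine pare _ ?_
    rw [map_sub, hxy, sub_self]
  rw [this, smul_zero]

end slemmas

section bridges
variable {A : Type*} [NonUnitalRing A] {N : ℕ} [NeZero N]
variable (e : ZMod N → A)

lemma sum_range_univ {M : Type*} [AddCommMonoid M] (f : ZMod N → M) :
    ∑ i ∈ Finset.range N, f (i : ZMod N) = ∑ x : ZMod N, f x := by
  refine Finset.sum_bij' (fun n _ => (n : ZMod N)) (fun x _ => x.val) ?_ ?_ ?_ ?_ ?_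
  · intro n _; exact Finset.mem_univ _
  · intro x _; exact Finset.mem_range.mpr (ZMod.val_lt x)
  · intro n hn; exact ZMod.val_cast_of_lt (Finset.mem_range.mp hn)
  · intro x _; exact ZMod.natCast_rightInverse x
  · intro n _; rfl

lemma qplus_eq (hdvd : (2:ℕ) ∣ N) (m : ℕ) :
    qplus e m = QW hdvd e wP m := by
  unfold qplus QW
  rw [← sum_range_univ]
  exact Finset.sum_congr rfl (fun i _ => by rw [show wP _ = 1 from rfl, one_smul])

lemma qminus_eq (hdvd : (2:ℕ) ∣ N) (m : ℕ) :
    qminus e m = QW hdvd e wM m := by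
  unfold qminus QW
  rw [← sum_range_univ]
  refine Finset.sum_congr rfl (fun i hi => ?_)
  congr 1
  rw [show wM (ZMod.castHom hdvd (ZMod 2) ((i : ℕ) : ZMod N)) =
    wM ((i : ℕ) : ZMod 2) by rw [map_natCast]]
  rcases Nat.even_or_odd i with he|ho
  · rw [he.neg_one_pow, show ((i:ℕ) : ZMod 2) = 0 from natCast_zmod2_even (Nat.even_iff.mp he)]
    rfl
  · rw [ho.neg_one_pow, show ((i:ℕ) : ZMod 2) = 1 from natCast_zmod2_odd (Nat.odd_iff.mp ho)]
    rfl

lemma qev_eq (hdvd : (2:ℕ) ∣ N) (m : ℕ) :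
    qev e m = QW hdvd e wE m := by
  unfold qev QW
  rw [← sum_range_univ]
  refine Finset.sum_congr rfl (fun i hi => ?_)
  rw [show wE (ZMod.castHom hdvd (ZMod 2) ((i : ℕ) : ZMod N)) =
    wE ((i : ℕ) : ZMod 2) by rw [map_natCast]]
  rcases Nat.even_or_odd i with he|ho
  · rw [if_pos he, show ((i:ℕ) : ZMod 2) = 0 from natCast_zmod2_even (Nat.even_iff.mp he),
      show wE 0 = 1 from rfl, one_smul]
  · rw [if_neg (by have h := Nat.odd_iff.mp ho; rw [Nat.even_iff]; omega),
      show ((i:ℕ) : ZMod 2) = 1 from natCast_zmod2_odd (Nat.odd_iff.mp ho),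
      show wE 1 = 0 from rfl, zero_smul]

lemma qod_eq (hdvd : (2:ℕ) ∣ N) (m : ℕ) :
    qod e m = QW hdvd e wO m := by
  unfold qod QW
  rw [← sum_range_univ]
  refine Finset.sum_congr rfl (fun i hi => ?_)
  rw [show wO (ZMod.castHom hdvd (ZMod 2) ((i : ℕ) : ZMod N)) =
    wO ((i : ℕ) : ZMod 2) by rw [map_natCast]]
  rcases Nat.even_or_odd i with he|ho
  · rw [if_neg (by have h := Nat.even_iff.mp he; rw [Nat.odd_iff]; omega), show ((i:ℕ) : ZMod 2) = 0 from natCast_zmod2_even (Nat.even_iff.mp he),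
      show wO 0 = 0 from rfl, zero_smul]
  · rw [if_pos ho, show ((i:ℕ) : ZMod 2) = 1 from natCast_zmod2_odd (Nat.odd_iff.mp ho),
      show wO 1 = 1 from rfl, one_smul]

end bridges

section combos
variable {M : Type*} [AddCommGroup M]

lemma combo1 (F : ℕ → M) (s : ℕ) (hF : F 0 = 0) :
    (∑ l ∈ Finset.range (s+1), ((2*s).choose l : ℤ) • F (2*s+2-2*l))
      + (∑ l ∈ Finset.range (s+1), ((2*s).choose l : ℤ) • F (2*s-2*l))
      = ∑ l ∈ Finset.range (s+1), ((2*s+1).choose l : ℤ) • F (2*s+2-2*l) := by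
  rw [Finset.sum_range_succ' (fun l => ((2*s).choose l : ℤ) • F (2*s+2-2*l)) s,
    Finset.sum_range_succ (fun l => ((2*s).choose l : ℤ) • F (2*s-2*l)) s,
    show (2*s - 2*s) = 0 by omega, hF, smul_zero, add_zero,
    Finset.sum_range_succ' (fun l => ((2*s+1).choose l : ℤ) • F (2*s+2-2*l)) s]
  have e1 : ∀ l ∈ Finset.range s, ((2*s).choose (l+1) : ℤ) • F (2*s+2-2*(l+1))
      = ((2*s).choose (l+1) : ℤ) • F (2*s-2*l) := fun l hl => by
    rw [show 2*s+2-2*(l+1) = 2*s-2*l by omega]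
  have e2 : ∀ l ∈ Finset.range s, ((2*s+1).choose (l+1) : ℤ) • F (2*s+2-2*(l+1))
      = ((2*s).choose (l+1) : ℤ) • F (2*s-2*l) + ((2*s).choose l : ℤ) • F (2*s-2*l) := fun l hl => by
    rw [show 2*s+2-2*(l+1) = 2*s-2*l by omega, Nat.choose_succ_succ (2*s) l]
    push_cast
    rw [add_smul]
    abel
  rw [Finset.sum_congr rfl e1, Finset.sum_congr rfl e2, Finset.sum_add_distrib]
  norm_num
  abel

lemma combo2 (F : ℕ → M) (s : ℕ) :
    (∑ l ∈ Finset.range (s+1), ((2*s+1).choose l : ℤ) • F (2*s+3-2*l))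
      + (∑ l ∈ Finset.range (s+1), ((2*s+1).choose l : ℤ) • F (2*s+1-2*l))
      + ((2*s+1).choose s : ℤ) • F 1
      = ∑ l ∈ Finset.range (s+2), ((2*s+2).choose l : ℤ) • F (2*s+3-2*l) := by
  rw [Finset.sum_range_succ' (fun l => ((2*s+1).choose l : ℤ) • F (2*s+3-2*l)) s,
    Finset.sum_range_succ' (fun l => ((2*s+2).choose l : ℤ) • F (2*s+3-2*l)) (s+1),
    Finset.sum_range_succ (fun l => ((2*s+2).choose (l+1) : ℤ) • F (2*s+3-2*(l+1))) s]
  have e1 : ∀ l ∈ Finset.range s, ((2*s+1).choose (l+1) : ℤ) • F (2*s+3-2*(l+1))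
      = ((2*s+1).choose (l+1) : ℤ) • F (2*s+1-2*l) := fun l hl => by
    rw [show 2*s+3-2*(l+1) = 2*s+1-2*l by omega]
  have e2 : ∀ l ∈ Finset.range s, ((2*s+2).choose (l+1) : ℤ) • F (2*s+3-2*(l+1))
      = ((2*s+1).choose (l+1) : ℤ) • F (2*s+1-2*l)
        + ((2*s+1).choose l : ℤ) • F (2*s+1-2*l) := fun l hl => by
    rw [show 2*s+3-2*(l+1) = 2*s+1-2*l by omega, Nat.choose_succ_succ (2*s+1) l]
    push_cast
    rw [add_smul]
    abel
  rw [Finset.sum_congr rfl e1, Finset.sum_congr rfl e2, Finset.sum_add_distrib,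
    Finset.sum_range_succ (fun l => ((2*s+1).choose l : ℤ) • F (2*s+1-2*l)) s,
    show 2*s+3-2*(s+1) = 1 by omega, show 2*s+1-2*s = 1 by omega,
    show (2*s+2).choose (s+1) = (2*s+1).choose s + (2*s+1).choose (s+1) from Nat.choose_succ_succ (2*s+1) s]
  have : (2*s+1).choose (s+1) = (2*s+1).choose s := by
    rw [← Nat.choose_symm (by omega : s+1 ≤ 2*s+1), show 2*s+1-(s+1) = s by omega]
  rw [this]
  push_cast
  rw [add_smul]
  norm_num
  abel

end combos
section tlemmas
variable {A : Type*} [NonUnitalRing A] {N : ℕ} (hN : 4 ≤ N) (hNe : Even N)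
variable {e : ZMod N → A}
variable (h1 : ∀ i : ZMod N, e i * e i = 0)
variable (h2 : ∀ i : ZMod N, e i * e (i + 1) * e i = e i)
variable (h3 : ∀ i : ZMod N, e (i + 1) * e i * e (i + 1) = e (i + 1))
variable (h4 : ∀ i j : ZMod N, j ≠ i - 1 → j ≠ i → j ≠ i + 1 → e i * e j = e j * e i)

lemma qt_odd1 (qf : ℕ → A) (s : ℕ) :
    qt qf (2*s+1) = ∑ l ∈ Finset.range (s+1), ((2*s).choose l : ℤ) • qf (2*s+1-2*l) := by
  unfold qt
  rw [show (2*s+1-1)/2+1 = s+1 by omega, show (2*s+1-1 : ℕ) = 2*s from rfl]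

lemma qt_ev (qf : ℕ → A) (s : ℕ) :
    qt qf (2*s+2) = ∑ l ∈ Finset.range (s+1), ((2*s+1).choose l : ℤ) • qf (2*s+2-2*l) := by
  unfold qt
  rw [show (2*s+2-1)/2+1 = s+1 by omega, show (2*s+2-1 : ℕ) = 2*s+1 from rfl]

lemma qt_odd3 (qf : ℕ → A) (s : ℕ) :
    qt qf (2*s+3) = ∑ l ∈ Finset.range (s+2), ((2*s+2).choose l : ℤ) • qf (2*s+3-2*l) := by
  unfold qt
  rw [show (2*s+3-1)/2+1 = s+2 by omega, show (2*s+3-1 : ℕ) = 2*s+2 from rfl]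

/-- pull a constant scalar out of a weighted sum -/
lemma pull_smul {T : Finset ℕ} (c : ℤ) (co : ℕ → ℤ) (G : ℕ → A) :
    (∑ l ∈ T, co l • (c • G l)) = c • ∑ l ∈ T, co l • G l := by
  rw [Finset.smul_sum]
  exact Finset.sum_congr rfl (fun l _ => smul_comm _ _ _)

include hN h1 h2 h3 h4

lemma lemT1 [NeZero N] (hdvd : (2:ℕ) ∣ N) (s : ℕ) (hs : 2*s+3 < N) :
    cm (QW hdvd e wE 1) (qt (qplus e) (2*s+1)) = qt (qminus e) (2*s+2) := by
  rw [qt_odd1, cm_sum_right,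
    Finset.sum_congr rfl (fun l hl => by
      have hls := Finset.mem_range.mp hl
      rw [cm_zsmul_right, qplus_eq e hdvd,
        lemS1 hN h1 h2 h3 h4 hdvd (2*s+1-2*l) (by omega) (by omega),
        show 2*s+1-2*l+1 = 2*s+2-2*l by omega,
        show 2*s+1-2*l-1 = 2*s-2*l by omega, smul_add])]
  rw [Finset.sum_add_distrib, combo1 (fun M => QW hdvd e wM M) s (QW_zero hdvd e wM), qt_ev]
  exact (Finset.sum_congr rfl (fun l _ => by rw [qminus_eq e hdvd])).symm

lemma lemT4 [NeZero N] (hdvd : (2:ℕ) ∣ N) (s : ℕ) (hs : 2*s+3 < N) :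
    cm (QW hdvd e wO 1) (qt (qplus e) (2*s+1)) = (-1 : ℤ) • qt (qminus e) (2*s+2) := by
  rw [qt_odd1, cm_sum_right,
    Finset.sum_congr rfl (fun l hl => by
      have hls := Finset.mem_range.mp hl
      rw [cm_zsmul_right, qplus_eq e hdvd,
        lemS4 hN h1 h2 h3 h4 hdvd (2*s+1-2*l) (by omega) (by omega),
        show 2*s+1-2*l+1 = 2*s+2-2*l by omega,
        show 2*s+1-2*l-1 = 2*s-2*l by omega, smul_add])]
  rw [Finset.sum_add_distrib, pull_smul, pull_smul, ← smul_add,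
    combo1 (fun M => QW hdvd e wM M) s (QW_zero hdvd e wM), qt_ev]
  refine congrArg (fun x => (-1 : ℤ) • x) ?_
  exact (Finset.sum_congr rfl (fun l _ => by rw [qminus_eq e hdvd])).symm

lemma lemT2core [NeZero N] (hdvd : (2:ℕ) ∣ N) (s : ℕ) (hs : 2*s+3 < N)
    (c : ℤ) (w : ZMod 2 → ℤ)
    (hS : ∀ m : ℕ, m % 2 = 0 → m + 2 ≤ N → 1 ≤ m →
      cm (QW hdvd e w 1) (QW hdvd e wM m)
        = c • QW hdvd e w (m+1) + cc m • (c • QW hdvd e w (m-1))) :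
    cm (QW hdvd e w 1) (qt (qminus e) (2*s+2))
      = c • ∑ l ∈ Finset.range (s+2), ((2*s+2).choose l : ℤ) • QW hdvd e w (2*s+3-2*l) := by
  rw [qt_ev, cm_sum_right,
    Finset.sum_congr rfl (fun l hl => by
      have hls := Finset.mem_range.mp hl
      rw [cm_zsmul_right, qminus_eq e hdvd,
        hS (2*s+2-2*l) (by omega) (by omega) (by omega),
        show 2*s+2-2*l+1 = 2*s+3-2*l by omega,
        show 2*s+2-2*l-1 = 2*s+1-2*l by omega, smul_add])]
  rw [Finset.sum_add_distrib, pull_smul]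
  have hsplit : (∑ l ∈ Finset.range (s+1),
      ((2*s+1).choose l : ℤ) • (cc (2*s+2-2*l) • (c • QW hdvd e w (2*s+1-2*l))))
      = c • ((∑ l ∈ Finset.range (s+1), ((2*s+1).choose l : ℤ) • QW hdvd e w (2*s+1-2*l))
          + ((2*s+1).choose s : ℤ) • QW hdvd e w 1) := by
    rw [Finset.sum_range_succ, Finset.sum_range_succ,
      Finset.sum_congr rfl (fun l hl => by
        have hls := Finset.mem_range.mp hl
        rw [cc_ne_two (by omega), one_smul]),
      pull_smul, show 2*s+2-2*s = 2 by omega, cc_two, show 2*s+1-2*s = 1 by omega]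
    module
  rw [hsplit, ← smul_add, ← combo2 (fun M => QW hdvd e w M) s]
  module

lemma lemT3 [NeZero N] (hNe' : Even N) (hdvd : (2:ℕ) ∣ N) {w w' : ZMod 2 → ℤ}
    (hw : ∀ t t', w t ≠ 0 → w' t' ≠ 0 → t = t') (s : ℕ) (hs : 2*s+3 < N)
    (qf : ℕ → A) (hqf : ∀ m, qf m = QW hdvd e w' m) :
    cm (QW hdvd e w 1) (qt qf (2*s+3)) = 0 := by
  rw [qt_odd3, cm_sum_right]
  apply Finset.sum_eq_zero
  intro l hl
  have hls := Finset.mem_range.mp hl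
  rw [cm_zsmul_right, hqf,
    lemS3 hN hNe' h1 h2 h3 h4 hdvd hw (2*s+3-2*l) (by omega) (by omega), smul_zero]

end tlemmas

theorem stmt_15 {A : Type*} [NonUnitalRing A] [Module ℂ A]
    [SMulCommClass ℂ A A] [IsScalarTower ℂ A A]
    (N : ℕ) (hN : 4 ≤ N) (hNe : Even N) (z : ℂ)
    (e : ZMod N → A)
    (h1 : ∀ i : ZMod N, e i * e i = 0)
    (h2 : ∀ i : ZMod N, e i * e (i + 1) * e i = e i)
    (h3 : ∀ i : ZMod N, e (i + 1) * e i * e (i + 1) = e (i + 1))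
    (h4 : ∀ i j : ZMod N, j ≠ i - 1 → j ≠ i → j ≠ i + 1 → e i * e j = e j * e i) :
    ∀ s : ℕ, 2 * s + 3 < N →
      ∀ Q : A, Q = qt (qplus e) (2 * s + 1) + (z / 2) • qt (qminus e) (2 * s + 2) →
        cm (qev e 1) Q = qt (qminus e) (2 * s + 2) - z • qt (qev e) (2 * s + 3) ∧
        cm (qev e 1) (cm (qev e 1) Q) = (-2 : ℤ) • qt (qev e) (2 * s + 3) ∧
        cm (qev e 1) (cm (qev e 1) (cm (qev e 1) Q)) = 0 ∧
        cm (qod e 1) Q = -(qt (qminus e) (2 * s + 2)) + z • qt (qod e) (2 * s + 3) ∧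
        cm (qod e 1) (cm (qod e 1) Q) = (-2 : ℤ) • qt (qod e) (2 * s + 3) ∧
        cm (qod e 1) (cm (qod e 1) (cm (qod e 1) Q)) = 0 ∧
        Q - z • cm (qev e 1) Q + (z ^ 2 / 2) • cm (qev e 1) (cm (qev e 1) Q) =
          qt (qplus e) (2 * s + 1) - (z / 2) • qt (qminus e) (2 * s + 2) ∧
        Q + z • cm (qod e 1) Q + (z ^ 2 / 2) • cm (qod e 1) (cm (qod e 1) Q) =
          qt (qplus e) (2 * s + 1) - (z / 2) • qt (qminus e) (2 * s + 2) := by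
  intro s hs Q hQ
  haveI : NeZero N := ⟨by omega⟩
  have hdvd : (2:ℕ) ∣ N := hNe.two_dvd
  have hHe : qev e 1 = QW hdvd e wE 1 := qev_eq e hdvd 1
  have hHo : qod e 1 = QW hdvd e wO 1 := qod_eq e hdvd 1
  have hqev3 : qt (qev e) (2*s+3)
      = ∑ l ∈ Finset.range (s+2), ((2*s+2).choose l : ℤ) • QW hdvd e wE (2*s+3-2*l) := by
    rw [qt_odd3]
    exact Finset.sum_congr rfl (fun l _ => by rw [qev_eq e hdvd])
  have hqod3 : qt (qod e) (2*s+3)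
      = ∑ l ∈ Finset.range (s+2), ((2*s+2).choose l : ℤ) • QW hdvd e wO (2*s+3-2*l) := by
    rw [qt_odd3]
    exact Finset.sum_congr rfl (fun l _ => by rw [qod_eq e hdvd])
  have T1 := lemT1 hN h1 h2 h3 h4 hdvd s hs
  have T4 := lemT4 hN h1 h2 h3 h4 hdvd s hs
  have T2 : cm (QW hdvd e wE 1) (qt (qminus e) (2*s+2)) = (-2:ℤ) • qt (qev e) (2*s+3) := by
    rw [hqev3]
    exact lemT2core hN h1 h2 h3 h4 hdvd s hs (-2) wE
      (fun m hm0 hmN hm1 => lemS2 hN h1 h2 h3 h4 hdvd m hm0 hmN hm1)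
  have T5 : cm (QW hdvd e wO 1) (qt (qminus e) (2*s+2)) = (2:ℤ) • qt (qod e) (2*s+3) := by
    rw [hqod3]
    exact lemT2core hN h1 h2 h3 h4 hdvd s hs 2 wO
      (fun m hm0 hmN hm1 => lemS5 hN h1 h2 h3 h4 hdvd m hm0 hmN hm1)
  have T3 : cm (QW hdvd e wE 1) (qt (qev e) (2*s+3)) = 0 :=
    lemT3 hN h1 h2 h3 h4 hNe hdvd (by decide) s hs (qev e) (fun m => qev_eq e hdvd m)
  have T6 : cm (QW hdvd e wO 1) (qt (qod e) (2*s+3)) = 0 :=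
    lemT3 hN h1 h2 h3 h4 hNe hdvd (by decide) s hs (qod e) (fun m => qod_eq e hdvd m)
  have E1 : cm (qev e 1) Q = qt (qminus e) (2*s+2) - z • qt (qev e) (2*s+3) := by
    rw [hQ, cm_add_right, cm_csmul_right, hHe, T1, T2,
      ← Int.cast_smul_eq_zsmul ℂ (-2) (qt (qev e) (2*s+3)), smul_smul,
      show (z/2 * (((-2:ℤ)):ℂ)) = -z by push_cast; ring, neg_smul, ← sub_eq_add_neg]
  have E2 : cm (qev e 1) (cm (qev e 1) Q) = (-2:ℤ) • qt (qev e) (2*s+3) := by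
    rw [E1, cm_sub_right, cm_csmul_right, hHe, T2, T3, smul_zero, sub_zero]
  have E3 : cm (qev e 1) (cm (qev e 1) (cm (qev e 1) Q)) = 0 := by
    rw [E2, cm_zsmul_right, hHe, T3, smul_zero]
  have E4 : cm (qod e 1) Q = -(qt (qminus e) (2*s+2)) + z • qt (qod e) (2*s+3) := by
    rw [hQ, cm_add_right, cm_csmul_right, hHo, T4, T5, neg_one_zsmul,
      ← Int.cast_smul_eq_zsmul ℂ 2 (qt (qod e) (2*s+3)), smul_smul,
      show (z/2 * (((2:ℤ)):ℂ)) = z by push_cast; ring]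
  have E5 : cm (qod e 1) (cm (qod e 1) Q) = (-2:ℤ) • qt (qod e) (2*s+3) := by
    rw [E4, cm_add_right, cm_neg_right, cm_csmul_right, hHo, T5, T6, smul_zero, add_zero,
      ← neg_smul]
  have E6 : cm (qod e 1) (cm (qod e 1) (cm (qod e 1) Q)) = 0 := by
    rw [E5, cm_zsmul_right, hHo, T6, smul_zero]
  refine ⟨E1, E2, E3, E4, E5, E6, ?_, ?_⟩
  · rw [E2, E1, hQ, ← Int.cast_smul_eq_zsmul ℂ (-2) (qt (qev e) (2*s+3)),
      show (((-2:ℤ)):ℂ) = -2 by norm_num]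
    module
  · rw [E5, E4, hQ, ← Int.cast_smul_eq_zsmul ℂ (-2) (qt (qod e) (2*s+3)),
      show (((-2:ℤ)):ℂ) = -2 by norm_num]
    module
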